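/- The surface in ℙ¹ × ℙ¹ × ℙ¹ defined by (s_1² − t_1²)(s_2² − t_2²)(s_3² − t_3²) − 8 s_1 s_2 s_3 t_1 t_2 t_3 = 0 is smooth and irreducible. -/

import Mathlib

section NotSquare
open Polynomial

lemma not_square_quartic (K : Polynomial ℂ) :
    K ^ 2 ≠ 36 * X ^ 4 + 184 * X ^ 2 + 36 := by
  intro hK
  have hfdeg : (36 * X ^ 4 + 184 * X ^ 2 + 36 : Polynomial ℂ).natDegree = 4 := by
    compute_degree!
  have hdK : K.natDegree = 2 := by
    have h := congrArg natDegree hK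
    rw [natDegree_pow, hfdeg] at h
    omega
  set a := K.coeff 2 with ha
  set b := K.coeff 1 with hb
  set c := K.coeff 0 with hc
  have hKform : K = C a * X ^ 2 + C b * X + C c := by
    conv_lhs => rw [K.as_sum_range' 3 (by omega)]
    simp [Finset.sum_range_succ, ← C_mul_X_pow_eq_monomial]
    ring
  rw [hKform] at hK
  have expand : (C a * X ^ 2 + C b * X + C c) ^ 2
      = C (a ^ 2) * X ^ 4 + C (2 * a * b) * X ^ 3 + C (2 * a * c + b ^ 2) * X ^ 2 +
        C (2 * b * c) * X + C (c ^ 2) := by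
    simp only [map_add, map_mul, map_pow, map_ofNat]
    ring
  have rhs : (36 * X ^ 4 + 184 * X ^ 2 + 36 : Polynomial ℂ)
      = C 36 * X ^ 4 + C 0 * X ^ 3 + C 184 * X ^ 2 + C 0 * X + C 36 := by
    simp [map_ofNat]
  rw [expand, rhs] at hK
  have e4 := congrArg (fun P => Polynomial.coeff P 4) hK
  have e3 := congrArg (fun P => Polynomial.coeff P 3) hK
  have e2 := congrArg (fun P => Polynomial.coeff P 2) hK
  have e0 := congrArg (fun P => Polynomial.coeff P 0) hK
  simp only [coeff_add, coeff_C_mul, coeff_X_pow, coeff_C, coeff_X] at e4 e3 e2 e0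
  norm_num at e4 e3 e2 e0
  have hane : a ≠ 0 := by
    intro h
    rw [h] at e4
    norm_num at e4
  have hbz : b = 0 := e3.resolve_left hane
  rw [hbz] at e2
  norm_num at e2
  have : (33856 : ℂ) = 5184 := by
    calc (33856 : ℂ) = (2 * (a * c)) ^ 2 := by rw [show 2 * (a * c) = 2 * a * c by ring, e2]; norm_num
    _ = 4 * (a ^ 2) * (c ^ 2) := by ring
    _ = 5184 := by rw [e4, e0]; norm_num
  norm_num at this

end NotSquare


open MvPolynomial

/-- The trihomogeneous polynomial
`(s₁² − t₁²)(s₂² − t₂²)(s₃² − t₃²) − 8 s₁ s₂ s₃ t₁ t₂ t₃`, in variables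
`s₁ = X 0, t₁ = X 1, s₂ = X 2, t₂ = X 3, s₃ = X 4, t₃ = X 5`. -/
noncomputable def diceF : MvPolynomial (Fin 6) ℂ :=
  (X 0 ^ 2 - X 1 ^ 2) * (X 2 ^ 2 - X 3 ^ 2) * (X 4 ^ 2 - X 5 ^ 2) -
    8 * (X 0 * X 2 * X 4 * X 1 * X 3 * X 5)




private lemma key_sq (u v : ℂ) (h1 : u ^ 2 = v ^ 2) (h2 : u * v = 0)
    (h3 : ¬(u = 0 ∧ v = 0)) : False := by
  rcases mul_eq_zero.mp h2 with h | h
  · exact h3 ⟨h, by have : v ^ 2 = 0 := by rw [← h1, h]; ring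
                    exact pow_eq_zero_iff (n := 2) (by norm_num) |>.mp this⟩
  · exact h3 ⟨by have : u ^ 2 = 0 := by rw [h1, h]; ring
                 exact pow_eq_zero_iff (n := 2) (by norm_num) |>.mp this, h⟩

lemma dice_aux (s₁ t₁ s₂ t₂ s₃ t₃ : ℂ)
    (hn2 : ¬(s₂ = 0 ∧ t₂ = 0)) (hn3 : ¬(s₃ = 0 ∧ t₃ = 0))
    (h1 : 2 * s₁ * (s₂ ^ 2 - t₂ ^ 2) * (s₃ ^ 2 - t₃ ^ 2) - 8 * s₂ * s₃ * t₁ * t₂ * t₃ = 0)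
    (h3 : 2 * s₂ * (s₁ ^ 2 - t₁ ^ 2) * (s₃ ^ 2 - t₃ ^ 2) - 8 * s₁ * s₃ * t₁ * t₂ * t₃ = 0)
    (h4 : -2 * t₂ * (s₁ ^ 2 - t₁ ^ 2) * (s₃ ^ 2 - t₃ ^ 2) - 8 * s₁ * s₂ * s₃ * t₁ * t₃ = 0)
    (h5 : 2 * s₃ * (s₁ ^ 2 - t₁ ^ 2) * (s₂ ^ 2 - t₂ ^ 2) - 8 * s₁ * s₂ * t₁ * t₂ * t₃ = 0)
    (h6 : -2 * t₃ * (s₁ ^ 2 - t₁ ^ 2) * (s₂ ^ 2 - t₂ ^ 2) - 8 * s₁ * s₂ * s₃ * t₁ * t₂ = 0)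
    (ha : s₁ ^ 2 = t₁ ^ 2) (hs : s₁ ≠ 0) (ht : t₁ ≠ 0) : False := by
  have h8 : (8 : ℂ) * (s₁ * t₁) ≠ 0 := by
    simp [hs, ht]
  have e3 : s₃ * (t₂ * t₃) = 0 := by
    have hh : (8 * (s₁ * t₁)) * (s₃ * (t₂ * t₃)) = 0 := by
      linear_combination (2 * s₂ * (s₃ ^ 2 - t₃ ^ 2)) * ha - h3
    exact (mul_eq_zero.mp hh).resolve_left h8
  have e4 : s₂ * (s₃ * t₃) = 0 := by
    have hh : (8 * (s₁ * t₁)) * (s₂ * (s₃ * t₃)) = 0 := by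
      linear_combination (-2 * t₂ * (s₃ ^ 2 - t₃ ^ 2)) * ha - h4
    exact (mul_eq_zero.mp hh).resolve_left h8
  have e5 : s₂ * (t₂ * t₃) = 0 := by
    have hh : (8 * (s₁ * t₁)) * (s₂ * (t₂ * t₃)) = 0 := by
      linear_combination (2 * s₃ * (s₂ ^ 2 - t₂ ^ 2)) * ha - h5
    exact (mul_eq_zero.mp hh).resolve_left h8
  have e6 : s₂ * (s₃ * t₂) = 0 := by
    have hh : (8 * (s₁ * t₁)) * (s₂ * (s₃ * t₂)) = 0 := by
      linear_combination (-2 * t₃ * (s₂ ^ 2 - t₂ ^ 2)) * ha - h6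
    exact (mul_eq_zero.mp hh).resolve_left h8
  by_cases hs₃ : s₃ = 0
  · have ht₃ : t₃ ≠ 0 := fun h => hn3 ⟨hs₃, h⟩
    subst hs₃
    have hb : s₂ ^ 2 = t₂ ^ 2 := by
      have hh : (2 * s₁ * t₃ ^ 2) * (s₂ ^ 2 - t₂ ^ 2) = 0 := by linear_combination -h1
      have := (mul_eq_zero.mp hh).resolve_left (by simp [hs, ht₃])
      linear_combination this
    have hst2 : s₂ * t₂ = 0 := by
      have := e5
      rcases mul_eq_zero.mp this with h | h
      · simp [h]
      · rcases mul_eq_zero.mp h with h' | h'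
        · simp [h']
        · exact absurd h' ht₃
    exact key_sq s₂ t₂ hb hst2 hn2
  · have ht₂t₃ : t₂ * t₃ = 0 := (mul_eq_zero.mp e3).resolve_left hs₃
    by_cases ht₃ : t₃ = 0
    · subst ht₃
      have hb : s₂ ^ 2 = t₂ ^ 2 := by
        have hh : (2 * s₁ * s₃ ^ 2) * (s₂ ^ 2 - t₂ ^ 2) = 0 := by linear_combination h1
        have := (mul_eq_zero.mp hh).resolve_left (by simp [hs, hs₃])
        linear_combination this
      have hst2 : s₂ * t₂ = 0 := by
        rcases mul_eq_zero.mp e6 with h | h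
        · simp [h]
        · rcases mul_eq_zero.mp h with h' | h'
          · exact absurd h' hs₃
          · simp [h']
      exact key_sq s₂ t₂ hb hst2 hn2
    · have ht₂ : t₂ = 0 := by
        rcases mul_eq_zero.mp ht₂t₃ with h | h
        · exact h
        · exact absurd h ht₃
      have hs₂ : s₂ = 0 := by
        rcases mul_eq_zero.mp e4 with h | h
        · exact h
        · rcases mul_eq_zero.mp h with h' | h'
          · exact absurd h' hs₃
          · exact absurd h' ht₃
      exact hn2 ⟨hs₂, ht₂⟩

lemma dice_smooth :
    ∀ s₁ t₁ s₂ t₂ s₃ t₃ : ℂ,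
      ¬(s₁ = 0 ∧ t₁ = 0) → ¬(s₂ = 0 ∧ t₂ = 0) → ¬(s₃ = 0 ∧ t₃ = 0) →
      (s₁ ^ 2 - t₁ ^ 2) * (s₂ ^ 2 - t₂ ^ 2) * (s₃ ^ 2 - t₃ ^ 2) -
          8 * s₁ * s₂ * s₃ * t₁ * t₂ * t₃ = 0 →
      ¬(2 * s₁ * (s₂ ^ 2 - t₂ ^ 2) * (s₃ ^ 2 - t₃ ^ 2) - 8 * s₂ * s₃ * t₁ * t₂ * t₃ = 0 ∧
        -2 * t₁ * (s₂ ^ 2 - t₂ ^ 2) * (s₃ ^ 2 - t₃ ^ 2) - 8 * s₁ * s₂ * s₃ * t₂ * t₃ = 0 ∧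
        2 * s₂ * (s₁ ^ 2 - t₁ ^ 2) * (s₃ ^ 2 - t₃ ^ 2) - 8 * s₁ * s₃ * t₁ * t₂ * t₃ = 0 ∧
        -2 * t₂ * (s₁ ^ 2 - t₁ ^ 2) * (s₃ ^ 2 - t₃ ^ 2) - 8 * s₁ * s₂ * s₃ * t₁ * t₃ = 0 ∧
        2 * s₃ * (s₁ ^ 2 - t₁ ^ 2) * (s₂ ^ 2 - t₂ ^ 2) - 8 * s₁ * s₂ * t₁ * t₂ * t₃ = 0 ∧
        -2 * t₃ * (s₁ ^ 2 - t₁ ^ 2) * (s₂ ^ 2 - t₂ ^ 2) - 8 * s₁ * s₂ * s₃ * t₁ * t₂ = 0) := by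
  intro s₁ t₁ s₂ t₂ s₃ t₃ hn1 hn2 hn3 hF hall
  obtain ⟨h1, h2, h3, h4, h5, h6⟩ := hall
  have sqz : ∀ u : ℂ, u ^ 2 = 0 → u = 0 := fun u hu => by
    exact pow_eq_zero_iff (n := 2) (by norm_num) |>.mp hu
  have nz : ∀ u v : ℂ, ¬(u = 0 ∧ v = 0) → u ^ 2 = v ^ 2 → u ≠ 0 ∧ v ≠ 0 := by
    intro u v hnv he
    constructor
    · rintro rfl
      exact hnv ⟨rfl, sqz v (by linear_combination -he)⟩
    · rintro rfl
      exact hnv ⟨sqz u (by linear_combination he), rfl⟩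
  have ha : s₁ ^ 2 ≠ t₁ ^ 2 := by
    intro ha
    obtain ⟨hs, ht⟩ := nz _ _ hn1 ha
    exact dice_aux s₁ t₁ s₂ t₂ s₃ t₃ hn2 hn3 h1 h3 h4 h5 h6 ha hs ht
  have hb : s₂ ^ 2 ≠ t₂ ^ 2 := by
    intro hb
    obtain ⟨hs, ht⟩ := nz _ _ hn2 hb
    exact dice_aux s₂ t₂ s₁ t₁ s₃ t₃ hn1 hn3
      (by linear_combination h3) (by linear_combination h1) (by linear_combination h2)
      (by linear_combination h5) (by linear_combination h6) hb hs ht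
  have hc : s₃ ^ 2 ≠ t₃ ^ 2 := by
    intro hc
    obtain ⟨hs, ht⟩ := nz _ _ hn3 hc
    exact dice_aux s₃ t₃ s₁ t₁ s₂ t₂ hn1 hn2
      (by linear_combination h5) (by linear_combination h1) (by linear_combination h2)
      (by linear_combination h3) (by linear_combination h4) hc hs ht
  have ha0 : s₁ ^ 2 - t₁ ^ 2 ≠ 0 := sub_ne_zero.mpr ha
  have hb0 : s₂ ^ 2 - t₂ ^ 2 ≠ 0 := sub_ne_zero.mpr hb
  have hc0 : s₃ ^ 2 - t₃ ^ 2 ≠ 0 := sub_ne_zero.mpr hc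
  have k1 : s₁ ^ 2 + t₁ ^ 2 = 0 := by
    have hh : (s₁ ^ 2 + t₁ ^ 2) * ((s₂ ^ 2 - t₂ ^ 2) * (s₃ ^ 2 - t₃ ^ 2)) = 0 := by
      linear_combination (s₁ / 2) * h1 - (t₁ / 2) * h2
    exact (mul_eq_zero.mp hh).resolve_right (mul_ne_zero hb0 hc0)
  have k2 : s₂ ^ 2 + t₂ ^ 2 = 0 := by
    have hh : (s₂ ^ 2 + t₂ ^ 2) * ((s₁ ^ 2 - t₁ ^ 2) * (s₃ ^ 2 - t₃ ^ 2)) = 0 := by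
      linear_combination (s₂ / 2) * h3 - (t₂ / 2) * h4
    exact (mul_eq_zero.mp hh).resolve_right (mul_ne_zero ha0 hc0)
  have k3 : s₃ ^ 2 + t₃ ^ 2 = 0 := by
    have hh : (s₃ ^ 2 + t₃ ^ 2) * ((s₁ ^ 2 - t₁ ^ 2) * (s₂ ^ 2 - t₂ ^ 2)) = 0 := by
      linear_combination (s₃ / 2) * h5 - (t₃ / 2) * h6
    exact (mul_eq_zero.mp hh).resolve_right (mul_ne_zero ha0 hb0)
  have hs₁ : s₁ ≠ 0 := by
    rintro rfl
    exact hn1 ⟨rfl, sqz t₁ (by linear_combination k1)⟩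
  have hs₂ : s₂ ≠ 0 := by
    rintro rfl
    exact hn2 ⟨rfl, sqz t₂ (by linear_combination k2)⟩
  have hs₃ : s₃ ≠ 0 := by
    rintro rfl
    exact hn3 ⟨rfl, sqz t₃ (by linear_combination k3)⟩
  have hprod : s₁ * s₂ * s₃ ≠ 0 := mul_ne_zero (mul_ne_zero hs₁ hs₂) hs₃
  have hT : s₁ * s₂ * s₃ - t₁ * t₂ * t₃ = 0 := by
    have hh : (8 * (s₁ * s₂ * s₃)) * (s₁ * s₂ * s₃ - t₁ * t₂ * t₃) = 0 := by
      linear_combination hF + ((s₂ ^ 2 - t₂ ^ 2) * (s₃ ^ 2 - t₃ ^ 2)) * k1 +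
        (2 * s₁ ^ 2 * (s₃ ^ 2 - t₃ ^ 2)) * k2 + (4 * s₁ ^ 2 * s₂ ^ 2) * k3
    exact (mul_eq_zero.mp hh).resolve_left (by simp [hprod, mul_ne_zero, hs₁, hs₂, hs₃])
  have hfin : 2 * (s₁ * s₂ * s₃) ^ 2 = 0 := by
    linear_combination (s₁ * s₂ * s₃ + t₁ * t₂ * t₃) * hT + (s₂ ^ 2 * s₃ ^ 2) * k1 +
      (-(t₁ ^ 2) * s₃ ^ 2) * k2 + (t₁ ^ 2 * t₂ ^ 2) * k3
  have : (s₁ * s₂ * s₃) ^ 2 = 0 := by linear_combination hfin / 2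
  exact hprod (sqz _ this)




noncomputable def pS : MvPolynomial (Fin 5) ℂ := (X 1 ^ 2 - X 2 ^ 2) * (X 3 ^ 2 - X 4 ^ 2)
noncomputable def qS : MvPolynomial (Fin 5) ℂ := -(8 * (X 0 * X 1 * X 2 * X 3 * X 4))
noncomputable def rS : MvPolynomial (Fin 5) ℂ := -((X 1 ^ 2 - X 2 ^ 2) * (X 3 ^ 2 - X 4 ^ 2) * X 0 ^ 2)

noncomputable def Pp : Polynomial (MvPolynomial (Fin 5) ℂ) :=
  Polynomial.C pS * Polynomial.X ^ 2 + Polynomial.C qS * Polynomial.X + Polynomial.C rS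

lemma equiv_diceF : finSuccEquiv ℂ 5 diceF = Pp := by
  have h1 : (1 : Fin 6) = Fin.succ 0 := rfl
  have h2 : (2 : Fin 6) = Fin.succ 1 := rfl
  have h3 : (3 : Fin 6) = Fin.succ 2 := rfl
  have h4 : (4 : Fin 6) = Fin.succ 3 := rfl
  have h5 : (5 : Fin 6) = Fin.succ 4 := rfl
  rw [diceF, Pp, pS, qS, rS, h1, h2, h3, h4, h5]
  simp only [map_sub, map_mul, map_pow, map_ofNat, finSuccEquiv_X_zero, finSuccEquiv_X_succ,
    map_add, map_neg, Polynomial.C_mul, Polynomial.C_neg, Polynomial.C_pow]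
  ring

lemma primeX (i : Fin 5) : Prime (X i : MvPolynomial (Fin 5) ℂ) := by
  let e : MvPolynomial (Fin 5) ℂ ≃* Polynomial (MvPolynomial (Fin 4) ℂ) :=
    (renameEquiv ℂ (Equiv.swap i 0)).toMulEquiv.trans (finSuccEquiv ℂ 4).toMulEquiv
  have he : e (X i) = Polynomial.X := by
    show (finSuccEquiv ℂ 4) ((renameEquiv ℂ (Equiv.swap i 0)) (X i)) = Polynomial.X
    rw [renameEquiv_apply, rename_X, Equiv.swap_apply_left, finSuccEquiv_X_zero]
  exact (MulEquiv.prime_iff (p := X i) e).mp (by rw [he]; exact Polynomial.prime_X)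

lemma X_not_dvd_pS (i : Fin 5) (h : X i ∣ pS) : False := by
  obtain ⟨w, hw⟩ := h
  fin_cases i
  · have := congrArg (eval ![0, 1, 0, 1, 0]) hw
    simp [pS] at this
  · have := congrArg (eval ![1, 0, 1, 1, 0]) hw
    simp [pS] at this
  · have := congrArg (eval ![1, 1, 0, 1, 0]) hw
    simp [pS] at this
  · have := congrArg (eval ![1, 1, 0, 0, 1]) hw
    simp [pS] at this
  · have := congrArg (eval ![1, 1, 0, 1, 0]) hw
    simp [pS] at this

lemma pS_ne_zero : pS ≠ 0 := by
  intro h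
  have := congrArg (eval ![1, 1, 0, 1, 0]) h
  simp [pS] at this

lemma const_dvd_unit (g : MvPolynomial (Fin 5) ℂ) (hgp : g ∣ pS) (hgq : g ∣ qS) :
    IsUnit g := by
  by_contra hu
  have hg0 : g ≠ 0 := ne_zero_of_dvd_ne_zero pS_ne_zero hgp
  obtain ⟨π, hπirr, hπg⟩ := WfDvdMonoid.exists_irreducible_factor hu hg0
  have hπ : Prime π := UniqueFactorizationMonoid.irreducible_iff_prime.mp hπirr
  have hπq : π ∣ 8 * (X 0 * X 1 * X 2 * X 3 * X 4) := by
    have : π ∣ qS := hπg.trans hgq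
    rw [qS] at this
    exact (dvd_neg).mp this
  have h8 : IsUnit (8 : MvPolynomial (Fin 5) ℂ) := by
    rw [show (8 : MvPolynomial (Fin 5) ℂ) = C (8 : ℂ) from (map_ofNat C 8).symm]
    exact (isUnit_iff_ne_zero.mpr (by norm_num : (8 : ℂ) ≠ 0)).map C
  have hπmon : π ∣ X 0 * X 1 * X 2 * X 3 * X 4 := by
    rcases (hπ.dvd_mul).mp hπq with h | h
    · exact absurd (isUnit_of_dvd_unit h h8) hπ.not_unit
    · exact h
  have hXdvd : ∃ i : Fin 5, π ∣ X i := by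
    rcases (hπ.dvd_mul).mp hπmon with h | h
    · rcases (hπ.dvd_mul).mp h with h | h
      · rcases (hπ.dvd_mul).mp h with h | h
        · rcases (hπ.dvd_mul).mp h with h | h
          · exact ⟨0, h⟩
          · exact ⟨1, h⟩
        · exact ⟨2, h⟩
      · exact ⟨3, h⟩
    · exact ⟨4, h⟩
  obtain ⟨i, hi⟩ := hXdvd
  have hassoc : Associated π (X i) := hπ.associated_of_dvd (primeX i) hi
  exact X_not_dvd_pS i (hassoc.symm.dvd.trans (hπg.trans hgp))

lemma coeff_Pp_two : Pp.coeff 2 = pS := by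
  simp [Pp, Polynomial.coeff_C]

lemma natDegree_Pp : Pp.natDegree = 2 := Polynomial.natDegree_quadratic pS_ne_zero

lemma Pp_ne_zero : Pp ≠ 0 := fun h => pS_ne_zero (by rw [← coeff_Pp_two, h]; simp)

lemma const_case (g : MvPolynomial (Fin 5) ℂ) (W : Polynomial (MvPolynomial (Fin 5) ℂ))
    (h : Pp = Polynomial.C g * W) : IsUnit g := by
  apply const_dvd_unit g
  · refine ⟨W.coeff 2, ?_⟩
    rw [← coeff_Pp_two, h, Polynomial.coeff_C_mul]
  · have : Pp.coeff 1 = qS := by simp [Pp, Polynomial.coeff_C]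
    refine ⟨W.coeff 1, ?_⟩
    rw [← this, h, Polynomial.coeff_C_mul]

lemma irreducible_Pp : Irreducible Pp := by
  constructor
  · intro h
    have := Polynomial.natDegree_eq_zero_of_isUnit h
    rw [natDegree_Pp] at this
    norm_num at this
  · intro G H hGH
    by_contra hcon
    push_neg at hcon
    obtain ⟨hGu, hHu⟩ := hcon
    have hG0 : G ≠ 0 := by rintro rfl; exact Pp_ne_zero (by rw [hGH]; ring)
    have hH0 : H ≠ 0 := by rintro rfl; exact Pp_ne_zero (by rw [hGH]; ring)
    have hdeg : G.natDegree + H.natDegree = 2 := by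
      rw [← Polynomial.natDegree_mul hG0 hH0, ← hGH, natDegree_Pp]
    rcases (show (G.natDegree = 0 ∧ H.natDegree = 2) ∨ (G.natDegree = 1 ∧ H.natDegree = 1) ∨
        (G.natDegree = 2 ∧ H.natDegree = 0) by omega) with ⟨hG, _⟩ | ⟨hG, hH⟩ | ⟨_, hH⟩
    · have hGC := Polynomial.eq_C_of_natDegree_eq_zero hG
      have := const_case (G.coeff 0) H (by rw [hGH]; exact congrArg (· * H) hGC)
      exact hGu (hGC ▸ (this.map Polynomial.C))
    · obtain ⟨a, b, hGab⟩ := Polynomial.exists_eq_X_add_C_of_natDegree_le_one hG.le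
      obtain ⟨c, d, hHcd⟩ := Polynomial.exists_eq_X_add_C_of_natDegree_le_one hH.le
      rw [hGab, hHcd] at hGH
      have expand : (Polynomial.C a * Polynomial.X + Polynomial.C b) *
          (Polynomial.C c * Polynomial.X + Polynomial.C d)
          = Polynomial.C (a * c) * Polynomial.X ^ 2 + Polynomial.C (a * d + b * c) *
            Polynomial.X + Polynomial.C (b * d) := by
        simp only [Polynomial.C_mul, Polynomial.C_add]
        ring
      rw [expand] at hGH
      have e2 : pS = a * c := by
        have := congrArg (fun P => Polynomial.coeff P 2) hGH
        simpa [Pp, Polynomial.coeff_C, Polynomial.C_mul, Polynomial.C_add, mul_assoc,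
          Polynomial.coeff_C_mul, Polynomial.coeff_X_pow] using this
      have e1 : qS = a * d + b * c := by
        have := congrArg (fun P => Polynomial.coeff P 1) hGH
        simpa [Pp, Polynomial.coeff_C, Polynomial.C_mul, Polynomial.C_add, mul_assoc,
          Polynomial.coeff_C_mul, Polynomial.coeff_X_pow] using this
      have e0 : rS = b * d := by
        have := congrArg (fun P => Polynomial.coeff P 0) hGH
        simpa [Pp, Polynomial.coeff_C, Polynomial.C_mul, Polynomial.C_add, mul_assoc,
          Polynomial.coeff_C_mul, Polynomial.coeff_X_pow] using this
      have key : (a * d - b * c) ^ 2 = qS ^ 2 - 4 * (pS * rS) := by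
        linear_combination (-(qS + a * d + b * c)) * e1 + 4 * b * d * e2 + 4 * pS * e0
      -- evaluate to one-variable polynomials
      set ev : MvPolynomial (Fin 5) ℂ →+* Polynomial ℂ :=
        (eval₂Hom (Polynomial.C : ℂ →+* Polynomial ℂ)
          ![1, Polynomial.X, 1, 1, 2]) with hev
      have hKsq : (ev (a * d - b * c)) ^ 2
          = 36 * Polynomial.X ^ 4 + 184 * Polynomial.X ^ 2 + 36 := by
        rw [← map_pow, key]
        simp only [pS, qS, rS, map_sub, map_mul, map_add, map_neg, map_pow, map_ofNat, hev,
          eval₂Hom_X']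
        norm_num [Matrix.cons_val_zero, Matrix.cons_val_one]
        simp only [show (![1, Polynomial.X, 1, 1, 2] : Fin 5 → Polynomial ℂ) 2 = 1 from rfl, show (![1, Polynomial.X, 1, 1, 2] : Fin 5 → Polynomial ℂ) 3 = 1 from rfl,
          show (![1, Polynomial.X, 1, 1, 2] : Fin 5 → Polynomial ℂ) 4 = 2 from rfl]
        ring
      exact not_square_quartic _ hKsq
    · have hHC := Polynomial.eq_C_of_natDegree_eq_zero hH
      have := const_case (H.coeff 0) G (by rw [hGH, mul_comm]; exact congrArg (· * G) hHC)
      exact hHu (hHC ▸ (this.map Polynomial.C))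

lemma irreducible_diceF : Irreducible diceF := by
  have h : Irreducible ((finSuccEquiv ℂ 5) diceF) := equiv_diceF ▸ irreducible_Pp
  exact (MulEquiv.irreducible_iff (finSuccEquiv ℂ 5).toMulEquiv).mp h

/-- The surface in `ℙ¹ × ℙ¹ × ℙ¹` defined by
`(s₁² − t₁²)(s₂² − t₂²)(s₃² − t₃²) − 8 s₁ s₂ s₃ t₁ t₂ t₃ = 0` is smooth and
irreducible: the defining trihomogeneous polynomial is irreducible, and at every
point of the surface (with `(sᵢ, tᵢ) ≠ (0,0)` for each factor) not all six partial
derivatives vanish. -/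
theorem dice_surface_smooth_irreducible :
    Irreducible diceF ∧
    ∀ s₁ t₁ s₂ t₂ s₃ t₃ : ℂ,
      ¬(s₁ = 0 ∧ t₁ = 0) → ¬(s₂ = 0 ∧ t₂ = 0) → ¬(s₃ = 0 ∧ t₃ = 0) →
      (s₁ ^ 2 - t₁ ^ 2) * (s₂ ^ 2 - t₂ ^ 2) * (s₃ ^ 2 - t₃ ^ 2) -
          8 * s₁ * s₂ * s₃ * t₁ * t₂ * t₃ = 0 →
      ¬(2 * s₁ * (s₂ ^ 2 - t₂ ^ 2) * (s₃ ^ 2 - t₃ ^ 2) - 8 * s₂ * s₃ * t₁ * t₂ * t₃ = 0 ∧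
        -2 * t₁ * (s₂ ^ 2 - t₂ ^ 2) * (s₃ ^ 2 - t₃ ^ 2) - 8 * s₁ * s₂ * s₃ * t₂ * t₃ = 0 ∧
        2 * s₂ * (s₁ ^ 2 - t₁ ^ 2) * (s₃ ^ 2 - t₃ ^ 2) - 8 * s₁ * s₃ * t₁ * t₂ * t₃ = 0 ∧
        -2 * t₂ * (s₁ ^ 2 - t₁ ^ 2) * (s₃ ^ 2 - t₃ ^ 2) - 8 * s₁ * s₂ * s₃ * t₁ * t₃ = 0 ∧
        2 * s₃ * (s₁ ^ 2 - t₁ ^ 2) * (s₂ ^ 2 - t₂ ^ 2) - 8 * s₁ * s₂ * t₁ * t₂ * t₃ = 0 ∧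
        -2 * t₃ * (s₁ ^ 2 - t₁ ^ 2) * (s₂ ^ 2 - t₂ ^ 2) - 8 * s₁ * s₂ * s₃ * t₁ * t₂ = 0) :=
  ⟨irreducible_diceF, dice_smooth⟩
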